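/- Let κ be the unique positive real with ψ₁₂(κi) = 0, and define τ = 2νσ(2−σ)(κ²+1)/(2 − σ(κ²+1)). Then: τ = −2(κ²+1)·μ/(κi)^σ (in particular this quantity is real); 2.1647 < τ < 2.1648; the derivative of ψ₁₂ is ψ₁₂′(z) = (μ/z^{1+σ})·(z² − 1); and ψ₁₂′(κi)·(2κi/τ) = 1 (the normalization making Q have a 1-parabolic fixed point at ∞). -/

import Mathlib

open Complex
set_option maxHeartbeats 1000000

/-- `σ = (2/π)·arctan((3+√5)/2)`. -/
noncomputable def sigma : ℝ := 2 / Real.pi * Real.arctan ((3 + Real.sqrt 5) / 2)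

/-- `ν = 1 - 2√5/3`. -/
noncomputable def nu : ℝ := 1 - 2 * Real.sqrt 5 / 3

/-- `μ = (σ(σ-2)/3)·√(2/(1-cos(σπ)))·e^{iσπ/2}`. -/
noncomputable def mu : ℂ :=
  ((sigma * (sigma - 2) / 3 : ℝ) : ℂ) *
    ((Real.sqrt (2 / (1 - Real.cos (sigma * Real.pi))) : ℝ) : ℂ) *
    Complex.exp (((sigma * Real.pi / 2 : ℝ) : ℂ) * I)

/-- `ψ₁₂(z) = (μ/z^σ)·(z²/(2-σ) + 1/σ) + ν`, with the principal power `z^σ`. -/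
noncomputable def psi12 (z : ℂ) : ℂ :=
  mu / z ^ (sigma : ℂ) * (z ^ 2 / (2 - (sigma : ℂ)) + 1 / (sigma : ℂ)) + (nu : ℂ)

/-- `τ = 2νσ(2-σ)(κ²+1)/(2 - σ(κ²+1))`. -/
noncomputable def tauOf (κ : ℝ) : ℝ :=
  2 * nu * sigma * (2 - sigma) * (κ ^ 2 + 1) / (2 - sigma * (κ ^ 2 + 1))

/-! ### Auxiliary numeric lemmas -/

private lemma sqrt5_gt : (2.2360679774:ℝ) < Real.sqrt 5 := by
  have : (2.2360679774:ℝ) = Real.sqrt (2.2360679774^2) := (Real.sqrt_sq (by norm_num)).symm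
  rw [this]; exact Real.sqrt_lt_sqrt (by positivity) (by norm_num)

private lemma sqrt5_lt : Real.sqrt 5 < 2.2360679775 := by
  have : (2.2360679775:ℝ) = Real.sqrt (2.2360679775^2) := (Real.sqrt_sq (by norm_num)).symm
  rw [this]; exact Real.sqrt_lt_sqrt (by norm_num) (by norm_num)

private lemma exp_approx13 {x : ℝ} (h0 : 0 ≤ x) (h1 : x ≤ 1) :
    |Real.exp x - (1 + x + x^2/2 + x^3/6 + x^4/24 + x^5/120 + x^6/720 + x^7/5040 + x^8/40320
      + x^9/362880 + x^10/3628800 + x^11/39916800 + x^12/479001600)|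
      ≤ x^13 * (7/40475635200) := by
  have h := Real.exp_bound (x := x) (abs_le.mpr ⟨by linarith, h1⟩) (n := 13) (by norm_num)
  rw [_root_.abs_of_nonneg h0] at h
  refine le_trans (le_of_eq ?_) (h.trans (le_of_eq ?_))
  · congr 1
    simp [Finset.sum_range_succ, Nat.factorial]
    try ring
  · norm_num [Nat.factorial]

private lemma polyDeriv (c : ℝ) : HasDerivAt (fun y : ℝ => y - y^3/3 + y^5/5 - y^7/7 + y^9/9
    - y^11/11 + y^13/13 - y^15/15)
    (1 - c^2 + c^4 - c^6 + c^8 - c^10 + c^12 - c^14) c := by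
  have h := (((((((hasDerivAt_id c).sub ((hasDerivAt_pow 3 c).div_const 3)).add
    ((hasDerivAt_pow 5 c).div_const 5)).sub ((hasDerivAt_pow 7 c).div_const 7)).add
    ((hasDerivAt_pow 9 c).div_const 9)).sub ((hasDerivAt_pow 11 c).div_const 11)).add
    ((hasDerivAt_pow 13 c).div_const 13)).sub ((hasDerivAt_pow 15 c).div_const 15)
  exact h.congr_deriv (by push_cast; ring)

private lemma polyDeriv13 (c : ℝ) : HasDerivAt (fun y : ℝ => y - y^3/3 + y^5/5 - y^7/7 + y^9/9
    - y^11/11 + y^13/13)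
    (1 - c^2 + c^4 - c^6 + c^8 - c^10 + c^12) c := by
  have h := ((((((hasDerivAt_id c).sub ((hasDerivAt_pow 3 c).div_const 3)).add
    ((hasDerivAt_pow 5 c).div_const 5)).sub ((hasDerivAt_pow 7 c).div_const 7)).add
    ((hasDerivAt_pow 9 c).div_const 9)).sub ((hasDerivAt_pow 11 c).div_const 11)).add
    ((hasDerivAt_pow 13 c).div_const 13)
  exact h.congr_deriv (by push_cast; ring)

private lemma arctan_lb {x : ℝ} (hx : 0 ≤ x) :
    x - x^3/3 + x^5/5 - x^7/7 + x^9/9 - x^11/11 + x^13/13 - x^15/15 ≤ Real.arctan x := by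
  have hg : ∀ c : ℝ, HasDerivAt (fun y => Real.arctan y - (y - y^3/3 + y^5/5 - y^7/7 + y^9/9
      - y^11/11 + y^13/13 - y^15/15)) (c^16/(1+c^2)) c := by
    intro c
    have h := (Real.hasDerivAt_arctan c).sub (polyDeriv c)
    refine h.congr_deriv ?_
    have hc : (1:ℝ) + c^2 ≠ 0 := by positivity
    field_simp
    ring
  have hmono : Monotone (fun y => Real.arctan y - (y - y^3/3 + y^5/5 - y^7/7 + y^9/9
      - y^11/11 + y^13/13 - y^15/15)) := by
    apply monotone_of_deriv_nonneg
    · exact fun c => (hg c).differentiableAt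
    · intro c; rw [(hg c).deriv]; positivity
  have := hmono hx
  simp only [Real.arctan_zero] at this
  norm_num at this
  linarith

private lemma arctan_ub {x : ℝ} (hx : 0 ≤ x) :
    Real.arctan x ≤ x - x^3/3 + x^5/5 - x^7/7 + x^9/9 - x^11/11 + x^13/13 := by
  have hg : ∀ c : ℝ, HasDerivAt (fun y => (y - y^3/3 + y^5/5 - y^7/7 + y^9/9 - y^11/11
      + y^13/13) - Real.arctan y) (c^14/(1+c^2)) c := by
    intro c
    have h := (polyDeriv13 c).sub (Real.hasDerivAt_arctan c)
    refine h.congr_deriv ?_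
    have hc : (1:ℝ) + c^2 ≠ 0 := by positivity
    field_simp
    ring
  have hmono : Monotone (fun y => (y - y^3/3 + y^5/5 - y^7/7 + y^9/9 - y^11/11
      + y^13/13) - Real.arctan y) := by
    apply monotone_of_deriv_nonneg
    · exact fun c => (hg c).differentiableAt
    · intro c; rw [(hg c).deriv]; positivity
  have := hmono hx
  simp only [Real.arctan_zero] at this
  norm_num at this
  linarith

private lemma sigma_eq : sigma = 1 - 2 * Real.arctan ((3 - Real.sqrt 5)/2) / Real.pi := by
  have h5 : Real.sqrt 5 ^ 2 = 5 := Real.sq_sqrt (by norm_num)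
  have h5pos := sqrt5_gt
  have ht : (0:ℝ) < (3 + Real.sqrt 5)/2 := by nlinarith
  have hinv : ((3 + Real.sqrt 5)/2)⁻¹ = (3 - Real.sqrt 5)/2 :=
    inv_eq_of_mul_eq_one_right (by nlinarith)
  have harc := Real.arctan_inv_of_pos ht
  rw [hinv] at harc
  have hpi := Real.pi_pos
  rw [sigma, harc]
  field_simp
  ring

private lemma sigma_bounds : (0.767720452559:ℝ) ≤ sigma ∧ sigma ≤ 0.7677204754 := by
  have h5a := sqrt5_gt
  have h5b := sqrt5_lt
  have hq0 : (0:ℝ) ≤ (3 - Real.sqrt 5)/2 := by nlinarith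
  set q : ℝ := (3 - Real.sqrt 5)/2 with hqdef
  have hq1 : (0.38196601125:ℝ) ≤ q := by rw [hqdef]; nlinarith
  have hq2 : q ≤ (0.3819660113:ℝ) := by rw [hqdef]; nlinarith
  have hA1 : (0.364863824032:ℝ) ≤ Real.arctan q := by
    have h := arctan_lb (x := (0.38196601125:ℝ)) (by norm_num)
    have hm := Real.arctan_strictMono.monotone hq1
    have : (0.364863824032:ℝ) ≤ (0.38196601125:ℝ) - 0.38196601125^3/3 + 0.38196601125^5/5
        - 0.38196601125^7/7 + 0.38196601125^9/9 - 0.38196601125^11/11 + 0.38196601125^13/13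
        - 0.38196601125^15/15 := by norm_num
    linarith
  have hA2 : Real.arctan q ≤ (0.364863859909:ℝ) := by
    have h := arctan_ub (x := (0.3819660113:ℝ)) (by norm_num)
    have hm := Real.arctan_strictMono.monotone hq2
    have : (0.3819660113:ℝ) - 0.3819660113^3/3 + 0.3819660113^5/5 - 0.3819660113^7/7
        + 0.3819660113^9/9 - 0.3819660113^11/11 + 0.3819660113^13/13 ≤ (0.364863859909:ℝ) := by
      norm_num
    linarith
  have hpi1 : (3.14159265358979323846:ℝ) < Real.pi := Real.pi_gt_d20
  have hpi2 : Real.pi < 3.14159265358979323847 := Real.pi_lt_d20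
  rw [sigma_eq, ← hqdef]
  constructor
  · have : 2 * Real.arctan q / Real.pi ≤ 2 * 0.364863859909 / 3.14159265358979323846 := by
      apply div_le_div₀ (by norm_num) (by linarith) (by norm_num) (by linarith)
    have hnum : (2:ℝ) * 0.364863859909 / 3.14159265358979323846 ≤ 1 - 0.767720452559 := by
      rw [div_le_iff₀ (by norm_num)]; norm_num
    linarith
  · have : 2 * 0.364863824032 / 3.14159265358979323847 ≤ 2 * Real.arctan q / Real.pi := by
      apply div_le_div₀ (by positivity) (by linarith) (by linarith) (by linarith)
    have hnum : (1:ℝ) - 0.7677204754 ≤ 2 * 0.364863824032 / 3.14159265358979323847 := by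
      rw [le_div_iff₀ (by norm_num)]; norm_num
    linarith

private lemma sigma_pos : 0 < sigma := by have := sigma_bounds.1; linarith
private lemma sigma_lt_one : sigma < 1 := by have := sigma_bounds.2; linarith

private lemma cos_sigma_pi : Real.cos (sigma * Real.pi) = -(Real.sqrt 5)/3 := by
  have h5 : Real.sqrt 5 ^ 2 = 5 := Real.sq_sqrt (by norm_num)
  have h5pos := sqrt5_gt
  have hpi := Real.pi_pos
  have hsp : sigma * Real.pi = 2 * Real.arctan ((3 + Real.sqrt 5)/2) := by
    rw [sigma]; field_simp
  rw [hsp, Real.cos_two_mul, Real.cos_arctan]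
  have h1 : (0:ℝ) < 1 + ((3 + Real.sqrt 5)/2)^2 := by positivity
  have hs : Real.sqrt (1 + ((3 + Real.sqrt 5)/2)^2) ^ 2 = 1 + ((3 + Real.sqrt 5)/2)^2 :=
    Real.sq_sqrt (le_of_lt h1)
  have hspos : 0 < Real.sqrt (1 + ((3 + Real.sqrt 5)/2)^2) := Real.sqrt_pos.mpr h1
  rw [div_pow, one_pow, hs]
  field_simp
  nlinarith [hs, hspos, h5]

/-- The real constant `C = √(2/(1-cos σπ))`. -/
noncomputable def craw : ℝ := Real.sqrt (2 / (1 - Real.cos (sigma * Real.pi)))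

private lemma craw_bounds : (1.070466269319:ℝ) ≤ craw ∧ craw ≤ 1.07046626933 := by
  have h5a := sqrt5_gt
  have h5b := sqrt5_lt
  have h5 : Real.sqrt 5 ^ 2 = 5 := Real.sq_sqrt (by norm_num)
  rw [craw, cos_sigma_pi]
  have hx : (2:ℝ)/(1 - -(Real.sqrt 5)/3) = 6/(3 + Real.sqrt 5) := by
    rw [div_eq_div_iff (by nlinarith) (by nlinarith)]; ring
  rw [hx]
  constructor
  · have h1 : (1.070466269319:ℝ)^2 ≤ 6/(3 + Real.sqrt 5) := by
      rw [le_div_iff₀ (by nlinarith)]; nlinarith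
    calc (1.070466269319:ℝ) = Real.sqrt (1.070466269319^2) := (Real.sqrt_sq (by norm_num)).symm
      _ ≤ _ := Real.sqrt_le_sqrt h1
  · have h2 : 6/(3 + Real.sqrt 5) ≤ (1.07046626933:ℝ)^2 := by
      rw [div_le_iff₀ (by nlinarith)]; nlinarith
    calc Real.sqrt (6/(3 + Real.sqrt 5)) ≤ Real.sqrt (1.07046626933^2) := Real.sqrt_le_sqrt h2
      _ = _ := Real.sqrt_sq (by norm_num)

private lemma nu_bounds : (-0.490711985:ℝ) ≤ nu ∧ nu ≤ -0.490711984933 := by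
  have h5a := sqrt5_gt
  have h5b := sqrt5_lt
  constructor <;> (rw [nu]; nlinarith)

private lemma nu_neg : nu < 0 := by have := nu_bounds.2; linarith

/-! ### exp/log numeric facts -/

private lemma exp_la1 : Real.exp 0.794899700121 < 2.2142189 := by
  have h := exp_approx13 (x := 0.794899700121) (by norm_num) (by norm_num)
  rw [abs_le] at h
  have := h.1
  norm_num at this ⊢
  linarith

private lemma exp_lb2 : (2.2142192:ℝ) < Real.exp 0.79489983581 := by
  have h := exp_approx13 (x := 0.79489983581) (by norm_num) (by norm_num)
  rw [abs_le] at h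
  have := h.2
  norm_num at this ⊢
  linarith

private lemma exp_xa1 : (1.840911367675:ℝ) ≤ Real.exp 0.610260757515907507059639 := by
  have h := exp_approx13 (x := 0.610260757515907507059639) (by norm_num) (by norm_num)
  rw [abs_le] at h
  have := h.2
  norm_num at this ⊢
  linarith

private lemma exp_xb2 : Real.exp 0.610260879843435144074 ≤ (1.840911592871:ℝ) := by
  have h := exp_approx13 (x := 0.610260879843435144074) (by norm_num) (by norm_num)
  rw [abs_le] at h
  have := h.1
  norm_num at this ⊢
  linarith

private lemma rpow_a_lb : (1.840911367675:ℝ) ≤ (2.2142189:ℝ) ^ sigma := by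
  have hla : (0.794899700121:ℝ) < Real.log 2.2142189 :=
    (Real.lt_log_iff_exp_lt (by norm_num)).mpr exp_la1
  have hs1 := sigma_bounds.1
  have harg : (0.610260757515907507059639:ℝ) ≤ Real.log 2.2142189 * sigma := by
    have := mul_le_mul hla.le hs1 (by norm_num) (by linarith)
    calc (0.610260757515907507059639:ℝ) = 0.794899700121 * 0.767720452559 := by norm_num
      _ ≤ _ := this
  calc (1.840911367675:ℝ) ≤ Real.exp 0.610260757515907507059639 := exp_xa1
    _ ≤ Real.exp (Real.log 2.2142189 * sigma) := Real.exp_le_exp.mpr harg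
    _ = (2.2142189:ℝ) ^ sigma := (Real.rpow_def_of_pos (by norm_num) _).symm

private lemma rpow_b_ub : (2.2142192:ℝ) ^ sigma ≤ 1.840911592871 := by
  have hlb : Real.log 2.2142192 < 0.79489983581 :=
    (Real.log_lt_iff_lt_exp (by norm_num)).mpr exp_lb2
  have hs2 := sigma_bounds.2
  have hlogpos : 0 < Real.log 2.2142192 := Real.log_pos (by norm_num)
  have harg : Real.log 2.2142192 * sigma ≤ 0.610260879843435144074 := by
    have := mul_le_mul hlb.le hs2 (by linarith [sigma_bounds.1]) (by norm_num)
    calc Real.log 2.2142192 * sigma ≤ 0.79489983581 * 0.7677204754 := this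
      _ = 0.610260879843435144074 := by norm_num
  calc (2.2142192:ℝ) ^ sigma = Real.exp (Real.log 2.2142192 * sigma) :=
        Real.rpow_def_of_pos (by norm_num) _
    _ ≤ Real.exp 0.610260879843435144074 := Real.exp_le_exp.mpr harg
    _ ≤ _ := exp_xb2

/-! ### the root function and its monotonicity -/

private noncomputable def froot : ℝ → ℝ :=
  fun x => nu * x ^ sigma + (craw/3) * (sigma*(x^2+1)-2)

private lemma froot_hasDeriv {x : ℝ} (hx : 0 < x) :
    HasDerivAt froot (nu * (sigma * x^(sigma-1)) + (craw/3) * (sigma*(2*x))) x := by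
  have h1 := Real.hasDerivAt_rpow_const (x := x) (p := sigma) (Or.inl hx.ne')
  have h2 : HasDerivAt (fun y:ℝ => sigma*(y^2+1)-2) (sigma*(2*x)) x := by
    have h := (((hasDerivAt_pow 2 x).add_const 1).const_mul sigma).sub_const 2
    exact h.congr_deriv (by push_cast; ring)
  exact (h1.const_mul nu).add (h2.const_mul (craw/3))

private lemma froot_strictMono : StrictMonoOn froot (Set.Ici 1) := by
  apply strictMonoOn_of_deriv_pos (convex_Ici 1)
  · intro x hx
    have hx0 : (0:ℝ) < x := lt_of_lt_of_le one_pos hx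
    exact (froot_hasDeriv hx0).continuousAt.continuousWithinAt
  · intro x hx
    rw [interior_Ici] at hx
    have hx1 : (1:ℝ) < x := hx
    have hx0 : (0:ℝ) < x := lt_trans one_pos hx1
    rw [(froot_hasDeriv hx0).deriv]
    have hp1 : x ^ (sigma-1) ≤ 1 :=
      Real.rpow_le_one_of_one_le_of_nonpos hx1.le (by linarith [sigma_lt_one])
    have hp0 : 0 < x ^ (sigma-1) := Real.rpow_pos_of_pos hx0 _
    have hs1 := sigma_bounds.1
    have hs2 := sigma_bounds.2
    have hn1 := nu_bounds.1
    have hn2 := nu_bounds.2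
    have hc1 := craw_bounds.1
    have hkey : nu * (sigma * x^(sigma-1)) ≥ nu * sigma := by
      have h1 : (0:ℝ) ≤ (-(nu * sigma)) * (1 - x^(sigma-1)) :=
        mul_nonneg (by nlinarith) (by linarith)
      nlinarith
    have hns : nu * sigma ≥ -0.490711985 * 0.7677204754 := by
      nlinarith [mul_nonneg (sub_nonneg.mpr hn1) (le_of_lt sigma_pos),
        mul_nonneg (neg_nonneg.mpr (le_of_lt nu_neg)) (sub_nonneg.mpr hs2)]
    have ht1 : sigma*(2*x) ≥ 0.767720452559*2 := by nlinarith
    have hA : craw*(sigma*(2*x)) ≥ 1.070466269319*(0.767720452559*2) := by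
      have := mul_le_mul hc1 ht1 (by norm_num) (by linarith)
      linarith
    nlinarith

private lemma deriv_psi12 {z : ℂ} (hz : z ∈ Complex.slitPlane) :
    deriv psi12 z = mu / z ^ ((1:ℂ) + (sigma:ℂ)) * (z^2 - 1) := by
  have hz0 : z ≠ 0 := Complex.slitPlane_ne_zero hz
  have hzs : z ^ (sigma:ℂ) ≠ 0 := by
    rw [Ne, Complex.cpow_eq_zero_iff]
    simp [hz0]
  have hσ0 : (sigma:ℂ) ≠ 0 := Complex.ofReal_ne_zero.mpr (ne_of_gt sigma_pos)
  have h2σ : (2:ℂ) - (sigma:ℂ) ≠ 0 := by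
    rw [show (2:ℂ) - (sigma:ℂ) = ((2 - sigma : ℝ):ℂ) by push_cast; ring]
    exact Complex.ofReal_ne_zero.mpr (by have := sigma_lt_one; intro hc; linarith)
  have hpow : HasDerivAt (fun w : ℂ => w ^ (sigma:ℂ)) ((sigma:ℂ) * z ^ ((sigma:ℂ)-1)) z :=
    (Complex.hasStrictDerivAt_cpow_const hz).hasDerivAt
  have hinv : HasDerivAt (fun w : ℂ => (w ^ (sigma:ℂ))⁻¹)
      (-((sigma:ℂ) * z ^ ((sigma:ℂ)-1)) / (z ^ (sigma:ℂ))^2) z := hpow.inv hzs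
  have hpoly : HasDerivAt (fun w : ℂ => w^2/(2-(sigma:ℂ)) + 1/(sigma:ℂ))
      (2*z/(2-(sigma:ℂ))) z := by
    have h := ((hasDerivAt_pow 2 z).div_const (2-(sigma:ℂ))).add_const (1/(sigma:ℂ))
    refine h.congr_deriv ?_
    push_cast; ring
  have hfun : psi12 = fun w => mu * (w ^ (sigma:ℂ))⁻¹ * (w^2/(2-(sigma:ℂ)) + 1/(sigma:ℂ))
      + ((nu:ℝ):ℂ) := by
    funext w; rw [psi12]; ring
  have H : HasDerivAt psi12
      (mu * (-((sigma:ℂ) * z ^ ((sigma:ℂ)-1)) / (z ^ (sigma:ℂ))^2)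
        * (z^2/(2-(sigma:ℂ)) + 1/(sigma:ℂ))
        + mu * (z ^ (sigma:ℂ))⁻¹ * (2*z/(2-(sigma:ℂ)))) z := by
    rw [hfun]
    exact ((hinv.const_mul mu).mul hpoly).add_const _
  rw [H.deriv]
  have hz1 : z ^ ((sigma:ℂ)-1) = z ^ (sigma:ℂ) / z := by
    rw [Complex.cpow_sub _ _ hz0, Complex.cpow_one]
  have hz2 : z ^ ((1:ℂ)+(sigma:ℂ)) = z * z ^ (sigma:ℂ) := by
    rw [Complex.cpow_add _ _ hz0, Complex.cpow_one]
  rw [hz1, hz2, div_mul_eq_mul_div, eq_div_iff (mul_ne_zero hz0 hzs)]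
  field_simp
  ring

theorem stmt3 (κ : ℝ) (hκ : 0 < κ) (hroot : psi12 (κ * I) = 0) :
    ((tauOf κ : ℂ) = -2 * ((κ : ℂ) ^ 2 + 1) * mu / ((κ : ℂ) * I) ^ (sigma : ℂ)) ∧
    (2.1647 < tauOf κ ∧ tauOf κ < 2.1648) ∧
    (∀ z ∈ Complex.slitPlane,
      deriv psi12 z = mu / z ^ ((1 : ℂ) + (sigma : ℂ)) * (z ^ 2 - 1)) ∧
    deriv psi12 ((κ : ℂ) * I) * (2 * (κ : ℂ) * I / (tauOf κ : ℂ)) = 1 := by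
  have hs1 := sigma_bounds.1
  have hs2 := sigma_bounds.2
  have hn1 := nu_bounds.1
  have hn2 := nu_bounds.2
  have hc1 := craw_bounds.1
  have hc2 := craw_bounds.2
  have hσ0 : sigma ≠ 0 := ne_of_gt sigma_pos
  have h2σ0 : (2:ℝ) - sigma ≠ 0 := by have := sigma_lt_one; intro h; linarith
  have hκI : (κ:ℂ) * I ≠ 0 := mul_ne_zero (Complex.ofReal_ne_zero.mpr hκ.ne') I_ne_zero
  have hK : 0 < κ ^ sigma := Real.rpow_pos_of_pos hκ _
  have hKne : κ ^ sigma ≠ 0 := ne_of_gt hK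
  -- the principal power of κi
  have hcpow : ((κ:ℂ) * I) ^ (sigma:ℂ)
      = ((κ ^ sigma : ℝ) : ℂ) * Complex.exp (((sigma * Real.pi / 2 : ℝ) : ℂ) * I) := by
    have habs : ‖(κ:ℂ)*I‖ = κ := by
      simp [_root_.abs_of_pos hκ]
    have harg : ((κ:ℂ)*I).arg = Real.pi/2 := by
      rw [Complex.arg_real_mul I hκ, Complex.arg_I]
    have hlog : Complex.log ((κ:ℂ)*I) = ((Real.log κ : ℝ):ℂ) + ((Real.pi/2 : ℝ):ℂ)*I := by
      rw [Complex.log, habs, harg]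
    rw [Complex.cpow_def_of_ne_zero hκI, hlog,
      show (((Real.log κ : ℝ):ℂ) + ((Real.pi/2 : ℝ):ℂ)*I) * (sigma:ℂ)
        = ((Real.log κ * sigma : ℝ):ℂ) + ((sigma * Real.pi/2 : ℝ):ℂ)*I by push_cast; ring,
      Complex.exp_add, ← Complex.ofReal_exp, ← Real.rpow_def_of_pos hκ]
  have hE : Complex.exp (((sigma * Real.pi / 2 : ℝ) : ℂ) * I) ≠ 0 := Complex.exp_ne_zero _
  have hKcne : ((κ ^ sigma : ℝ) : ℂ) ≠ 0 := Complex.ofReal_ne_zero.mpr hKne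
  have hmudiv : mu / ((κ:ℂ) * I) ^ (sigma:ℂ)
      = ((sigma * (sigma - 2) / 3 * craw / κ ^ sigma : ℝ) : ℂ) := by
    have hmu : mu = ((sigma * (sigma - 2) / 3 * craw : ℝ):ℂ)
        * Complex.exp (((sigma * Real.pi / 2 : ℝ) : ℂ) * I) := by
      rw [mu, craw]; push_cast; ring
    rw [hmu, hcpow, mul_div_mul_right _ _ hE, ← Complex.ofReal_div]
  -- reduce the root equation to the reals
  have hsq : ((κ:ℂ)*I)^2 = ((-(κ^2) : ℝ):ℂ) := by
    rw [mul_pow, I_sq]; push_cast; ring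
  have hpsival : psi12 ((κ:ℂ)*I)
      = (((sigma * (sigma - 2) / 3 * craw / κ ^ sigma) * (-(κ^2)/(2-sigma) + 1/sigma) + nu : ℝ) : ℂ) := by
    rw [psi12, hmudiv, hsq]; push_cast; ring
  have hreal : (sigma * (sigma - 2) / 3 * craw / κ ^ sigma) * (-(κ^2)/(2-sigma) + 1/sigma) + nu = 0 := by
    have h := hroot
    rw [show ((κ:ℝ):ℂ) * I = (κ:ℂ) * I from rfl, hpsival] at h
    exact_mod_cast h
  -- the real root equation
  have hfk : nu * κ ^ sigma + (craw/3) * (sigma*(κ^2+1)-2) = 0 := by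
    field_simp at hreal
    have h0 : (3*sigma*(2-sigma)) * (nu * κ ^ sigma + (craw/3) * (sigma*(κ^2+1)-2)) = 0 := by
      linear_combination sigma * hreal
    exact (mul_eq_zero.mp h0).resolve_left
      (by refine mul_ne_zero (mul_ne_zero (by norm_num) hσ0) h2σ0)
  -- κ > 1
  have hk1 : 1 < κ := by
    by_contra h
    push_neg at h
    have h1 : sigma*(κ^2+1) - 2 < 0 := by nlinarith
    nlinarith [mul_pos (neg_pos.mpr nu_neg) hK]
  -- froot κ = 0
  have hfk' : froot κ = 0 := by rw [froot]; exact hfk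
  -- numeric: froot 2.2142189 < 0
  have hfa : froot (2.2142189:ℝ) < 0 := by
    rw [froot]
    have hXpos : (0:ℝ) < (2.2142189:ℝ) ^ sigma := Real.rpow_pos_of_pos (by norm_num) _
    have t1 : nu * (2.2142189:ℝ) ^ sigma ≤ -0.490711984933 * (2.2142189:ℝ) ^ sigma :=
      mul_le_mul_of_nonneg_right hn2 hXpos.le
    have t2 : (-0.490711984933:ℝ) * (2.2142189:ℝ) ^ sigma ≤ -0.490711984933 * 1.840911367675 :=
      mul_le_mul_of_nonpos_left rpow_a_lb (by norm_num)
    have u0 : (0:ℝ) ≤ sigma*((2.2142189:ℝ)^2+1)-2 := by nlinarith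
    have t3 : sigma*((2.2142189:ℝ)^2+1)-2 ≤ 0.7677204754*((2.2142189:ℝ)^2+1)-2 := by nlinarith
    have t4 : craw*(sigma*((2.2142189:ℝ)^2+1)-2)
        ≤ 1.07046626933*(0.7677204754*((2.2142189:ℝ)^2+1)-2) :=
      mul_le_mul hc2 t3 u0 (by norm_num)
    have hfin : (-0.490711984933:ℝ) * 1.840911367675
        + 1.07046626933*(0.7677204754*((2.2142189:ℝ)^2+1)-2)/3 < 0 := by norm_num
    linarith
  -- numeric: froot 2.2142192 > 0
  have hfb : 0 < froot (2.2142192:ℝ) := by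
    rw [froot]
    have hXpos : (0:ℝ) < (2.2142192:ℝ) ^ sigma := Real.rpow_pos_of_pos (by norm_num) _
    have t1 : (-0.490711985:ℝ) * (2.2142192:ℝ) ^ sigma ≤ nu * (2.2142192:ℝ) ^ sigma :=
      mul_le_mul_of_nonneg_right hn1 hXpos.le
    have t2 : (-0.490711985:ℝ) * 1.840911592871 ≤ (-0.490711985:ℝ) * (2.2142192:ℝ) ^ sigma :=
      mul_le_mul_of_nonpos_left rpow_b_ub (by norm_num)
    have u0 : (0:ℝ) ≤ 0.767720452559*((2.2142192:ℝ)^2+1)-2 := by norm_num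
    have t3 : 0.767720452559*((2.2142192:ℝ)^2+1)-2 ≤ sigma*((2.2142192:ℝ)^2+1)-2 := by nlinarith
    have t4 : 1.070466269319*(0.767720452559*((2.2142192:ℝ)^2+1)-2)
        ≤ craw*(sigma*((2.2142192:ℝ)^2+1)-2) :=
      mul_le_mul hc1 t3 u0 (by linarith)
    have hfin : (0:ℝ) < (-0.490711985:ℝ) * 1.840911592871
        + 1.070466269319*(0.767720452559*((2.2142192:ℝ)^2+1)-2)/3 := by norm_num
    linarith
  -- bracket κ
  have hak : (2.2142189:ℝ) < κ := by
    by_contra h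
    push_neg at h
    have := froot_strictMono.monotoneOn (Set.mem_Ici.mpr hk1.le)
      (Set.mem_Ici.mpr (by norm_num : (1:ℝ) ≤ 2.2142189)) h
    rw [hfk'] at this
    linarith
  have hbk : κ < (2.2142192:ℝ) := by
    by_contra h
    push_neg at h
    have := froot_strictMono.monotoneOn
      (Set.mem_Ici.mpr (by norm_num : (1:ℝ) ≤ 2.2142192)) (Set.mem_Ici.mpr hk1.le) h
    rw [hfk'] at this
    linarith
  have hu1 : (2.2142189:ℝ)^2 + 1 < κ^2 + 1 := by nlinarith
  have hu2 : κ^2 + 1 < (2.2142192:ℝ)^2 + 1 := by nlinarith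
  have hD : 2 - sigma*(κ^2+1) < 0 := by nlinarith
  have hDne : 2 - sigma*(κ^2+1) ≠ 0 := ne_of_lt hD
  -- key equation for tauOf
  have key : tauOf κ * (2 - sigma*(κ^2+1)) = 2*nu*sigma*(2-sigma)*(κ^2+1) := by
    rw [tauOf]
    exact div_mul_cancel₀ _ hDne
  -- tau bounds
  have hg1 : (0.767720452559:ℝ)*(2-0.767720452559) ≤ sigma*(2-sigma) := by nlinarith
  have hg2 : sigma*(2-sigma) ≤ (0.7677204754:ℝ)*(2-0.7677204754) := by nlinarith
  have hW1 : (0.767720452559:ℝ)*(2-0.767720452559)*((2.2142189:ℝ)^2+1)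
      ≤ sigma*(2-sigma)*(κ^2+1) :=
    mul_le_mul hg1 hu1.le (by norm_num) (by nlinarith)
  have hW2 : sigma*(2-sigma)*(κ^2+1)
      ≤ (0.7677204754:ℝ)*(2-0.7677204754)*((2.2142192:ℝ)^2+1) :=
    mul_le_mul hg2 hu2.le (by nlinarith) (by norm_num)
  have hWpos : (0:ℝ) < sigma*(2-sigma)*(κ^2+1) := by nlinarith
  have hN1 : nu*(sigma*(2-sigma)*(κ^2+1))
      ≥ -0.490711985 * ((0.7677204754:ℝ)*(2-0.7677204754)*((2.2142192:ℝ)^2+1)) := by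
    have t1 : nu*(sigma*(2-sigma)*(κ^2+1)) ≥ -0.490711985*(sigma*(2-sigma)*(κ^2+1)) :=
      mul_le_mul_of_nonneg_right hn1 hWpos.le
    have t2 : (-0.490711985:ℝ)*(sigma*(2-sigma)*(κ^2+1))
        ≥ -0.490711985*((0.7677204754:ℝ)*(2-0.7677204754)*((2.2142192:ℝ)^2+1)) :=
      mul_le_mul_of_nonpos_left hW2 (by norm_num)
    linarith
  have hN2 : nu*(sigma*(2-sigma)*(κ^2+1))
      ≤ -0.490711984933 * ((0.767720452559:ℝ)*(2-0.767720452559)*((2.2142189:ℝ)^2+1)) := by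
    have t1 : nu*(sigma*(2-sigma)*(κ^2+1)) ≤ -0.490711984933*(sigma*(2-sigma)*(κ^2+1)) :=
      mul_le_mul_of_nonneg_right hn2 hWpos.le
    have t2 : (-0.490711984933:ℝ)*(sigma*(2-sigma)*(κ^2+1))
        ≤ -0.490711984933*((0.767720452559:ℝ)*(2-0.767720452559)*((2.2142189:ℝ)^2+1)) :=
      mul_le_mul_of_nonpos_left hW1 (by norm_num)
    linarith
  have hDlb : 2 - (0.7677204754:ℝ)*((2.2142192:ℝ)^2+1) ≤ 2 - sigma*(κ^2+1) := by
    have : sigma*(κ^2+1) ≤ (0.7677204754:ℝ)*((2.2142192:ℝ)^2+1) :=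
      mul_le_mul hs2 hu2.le (by nlinarith) (by norm_num)
    linarith
  have hDub : 2 - sigma*(κ^2+1) ≤ 2 - (0.767720452559:ℝ)*((2.2142189:ℝ)^2+1) := by
    have : (0.767720452559:ℝ)*((2.2142189:ℝ)^2+1) ≤ sigma*(κ^2+1) :=
      mul_le_mul hs1 hu1.le (by norm_num) (by linarith)
    linarith
  have htau1 : (2.1647:ℝ) < tauOf κ := by
    by_contra h
    push_neg at h
    have hprod : tauOf κ * (2 - sigma*(κ^2+1)) ≥ 2.1647 * (2 - sigma*(κ^2+1)) :=
      mul_le_mul_of_nonpos_right h hD.le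
    nlinarith
  have htau2 : tauOf κ < 2.1648 := by
    by_contra h
    push_neg at h
    have hprod : tauOf κ * (2 - sigma*(κ^2+1)) ≤ 2.1648 * (2 - sigma*(κ^2+1)) :=
      mul_le_mul_of_nonpos_right h hD.le
    nlinarith
  -- part 1
  have part1R : tauOf κ = -2*(κ^2+1)*(sigma*(sigma-2)/3*craw/κ^sigma) := by
    rw [tauOf, div_eq_iff hDne]
    field_simp
    linear_combination (3*(2-sigma)) * hfk
  have part1 : ((tauOf κ :ℝ):ℂ) = -2 * ((κ:ℂ)^2+1) * mu / ((κ:ℂ)*I)^(sigma:ℂ) := by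
    rw [show -2 * ((κ:ℂ)^2+1) * mu / ((κ:ℂ)*I)^(sigma:ℂ)
        = (-2*((κ:ℂ)^2+1)) * (mu / ((κ:ℂ)*I)^(sigma:ℂ)) by ring, hmudiv, part1R]
    push_cast
    ring
  -- part 4
  have hslit : (κ:ℂ)*I ∈ Complex.slitPlane := by
    rw [Complex.mem_slitPlane_iff]
    right
    simp [hκ.ne']
  have hτpos : (0:ℝ) < tauOf κ := by linarith
  have hτne : ((tauOf κ:ℝ):ℂ) ≠ 0 := Complex.ofReal_ne_zero.mpr (ne_of_gt hτpos)
  have hPne : ((κ:ℂ)*I)^(sigma:ℂ) ≠ 0 := by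
    rw [Ne, Complex.cpow_eq_zero_iff]
    simp [hκI]
  have hpart1' : ((tauOf κ:ℝ):ℂ) * ((κ:ℂ)*I)^(sigma:ℂ) = -2 * ((κ:ℂ)^2+1) * mu := by
    rw [part1, div_mul_cancel₀ _ hPne]
  have part4 : deriv psi12 ((κ : ℂ) * I) * (2 * (κ : ℂ) * I / (tauOf κ : ℂ)) = 1 := by
    rw [deriv_psi12 hslit,
      show ((κ:ℂ)*I) ^ ((1:ℂ)+(sigma:ℂ)) = ((κ:ℂ)*I) * ((κ:ℂ)*I)^(sigma:ℂ) by
        rw [Complex.cpow_add _ _ hκI, Complex.cpow_one], hsq]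
    have hκ0 : (κ:ℂ) ≠ 0 := Complex.ofReal_ne_zero.mpr hκ.ne'
    field_simp
    push_cast
    linear_combination (-1) * hpart1'
  exact ⟨part1, ⟨htau1, htau2⟩, fun z hz => deriv_psi12 hz, part4⟩
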